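/- In a Coxeter group W, the lower interval [id, w] in the Bruhat order coincides (as a set) with the lower interval [id, w]_R in the right weak order if and only if w is the longest element of the standard parabolic subgroup W_{S(w)} generated by the support S(w) of w. -/

import Mathlib

open List

namespace CoxeterSystem

variable {B W : Type*} [Group W] {M : CoxeterMatrix B} (cs : CoxeterSystem M W)

/-- The Bruhat order on `W`, defined via the subword property: `u ≤ w` iff some
reduced word for `w` has a subword whose product is `u`. -/
def bruhatLE (u w : W) : Prop :=
  ∃ ω : List B, cs.IsReduced ω ∧ cs.wordProd ω = w ∧
    ∃ ω' : List B, ω'.Sublist ω ∧ cs.wordProd ω' = u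

/-- The right weak order on `W`: `u ≤_R w` iff `ℓ(u) + ℓ(u⁻¹ w) = ℓ(w)`. -/
def rightWeakLE (u w : W) : Prop :=
  cs.length u + cs.length (u⁻¹ * w) = cs.length w

/-- The left weak order on `W`: `u ≤_L w` iff `ℓ(u) + ℓ(w u⁻¹) = ℓ(w)`. -/
def leftWeakLE (u w : W) : Prop :=
  cs.length u + cs.length (w * u⁻¹) = cs.length w

/-- The support of `w`: the set of simple reflections occurring in some reduced word
for `w`. -/
def support (w : W) : Set B :=
  {i | ∃ ω : List B, cs.IsReduced ω ∧ cs.wordProd ω = w ∧ i ∈ ω}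

/-- The standard parabolic subgroup `W_J` generated by the simple reflections in `J`. -/
def parabolic (J : Set B) : Subgroup W := Subgroup.closure (cs.simple '' J)

/-- `w` is the longest element of the subgroup `H`. -/
def IsLongestOf (H : Subgroup W) (w : W) : Prop :=
  w ∈ H ∧ ∀ u ∈ H, cs.length u ≤ cs.length w

/-- The left descent set of `w`. -/
def leftDescents (w : W) : Set B :=
  {i | cs.length (cs.simple i * w) < cs.length w}

local prefix:100 "s" => cs.simple
local prefix:100 "π" => cs.wordProd
local prefix:100 "ℓ" => cs.length
local prefix:100 "ris" => cs.rightInvSeq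


attribute [local instance] Classical.propDecidable

private lemma conj_eq_iff' (x y t : W) : x * t * x⁻¹ = y ↔ t = x⁻¹ * y * x :=
  ⟨fun h => by rw [← h]; group, fun h => by rw [h]; group⟩

private noncomputable def sgnFun (i : B) : Function.End (W × ℤˣ) :=
  fun p => (s i * p.1 * s i, p.2 * (if p.1 = s i then -1 else 1))

private lemma conj_pow_self {a b : W} (ha : a * a = 1) (k : ℕ) :
    a * b ^ k * a = (a * b * a) ^ k := by
  induction k with
  | zero => simpa using ha
  | succ k ih =>
      rw [pow_succ, pow_succ, ← ih]
      calc a * (b ^ k * b) * a = a * b ^ k * (a * a) * b * a := by rw [ha]; group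
        _ = a * b ^ k * a * (a * b * a) := by group

/-- If `a² = 1` and `a p a = p⁻¹`, then `(pᵏ)⁻¹ (a pⁿ) pᵏ = a p^(2k+n)`. -/
private lemma conj_key {a p : W} (ha : a * a = 1) (hpa : a * p * a = p⁻¹) (k n : ℕ) :
    (p ^ k)⁻¹ * (a * p ^ n) * p ^ k = a * p ^ (2 * k + n) := by
  have A1 : a * p ^ k * a = (p ^ k)⁻¹ := by rw [conj_pow_self ha, hpa, inv_pow]
  have A2 : (p ^ k)⁻¹ * a = a * p ^ k := by
    rw [← A1]
    calc a * p ^ k * a * a = a * p ^ k * (a * a) := by group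
      _ = a * p ^ k := by rw [ha, mul_one]
  calc (p ^ k)⁻¹ * (a * p ^ n) * p ^ k = ((p ^ k)⁻¹ * a) * (p ^ n * p ^ k) := by group
    _ = a * (p ^ k * (p ^ n * p ^ k)) := by rw [A2]; group
    _ = a * p ^ (2 * k + n) := by rw [← pow_add, ← pow_add]; congr 1; ring

private lemma sgnFun_liftable : M.IsLiftable (cs.sgnFun :  B → Function.End (W × ℤˣ)) := by
  intro i j
  set m := M i j with hm
  set p : W := s i * s j with hp
  have ha : (s j) * (s j) = (1 : W) := cs.simple_mul_simple_self j
  have hpa : s j * p * s j = p⁻¹ := by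
    rw [hp, mul_inv_rev, cs.inv_simple, cs.inv_simple]
    calc s j * (s i * s j) * s j = s j * s i * (s j * s j) := by group
      _ = s j * s i := by rw [cs.simple_mul_simple_self j, mul_one]
  have hpm : p ^ m = 1 := cs.simple_mul_simple_pow i j
  have cond : ∀ (k n : ℕ) (t : W), (p ^ k * t * (p ^ k)⁻¹ = s j * p ^ n) ↔ t = s j * p ^ (2 * k + n) := by
    intro k n t
    rw [conj_eq_iff', conj_key ha hpa]
  have key : ∀ (k : ℕ) (t : W) (ε : ℤˣ), ((cs.sgnFun i * cs.sgnFun j) ^ k) (t, ε)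
      = (p ^ k * t * (p ^ k)⁻¹,
          ε * ∏ n ∈ Finset.range (2 * k), (if t = s j * p ^ n then (-1 : ℤˣ) else 1)) := by
    intro k
    induction k with
    | zero =>
        intro t ε
        show (t, ε) = _
        simp
    | succ k IH =>
      intro t ε
      have step : ((cs.sgnFun i * cs.sgnFun j) ^ (k+1)) (t, ε)
          = (cs.sgnFun i * cs.sgnFun j) (((cs.sgnFun i * cs.sgnFun j) ^ k) (t, ε)) := by
        rw [pow_succ']; rfl
      rw [step, IH]
      set u : W := p ^ k * t * (p ^ k)⁻¹ with hu
      show cs.sgnFun i (cs.sgnFun j (u, _)) = _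
      simp only [sgnFun]
      have c1 : (u = s j) ↔ t = s j * p ^ (2 * k) := by
        have h0 := cond k 0 t
        rw [pow_zero, mul_one, add_zero] at h0
        rw [hu]; exact h0
      have c2 : (s j * u * s j = s i) ↔ t = s j * p ^ (2 * k + 1) := by
        have e1 : (s j * u * s j = s i) ↔ (u = s j * s i * s j) := by
          constructor
          · intro h
            calc u = (s j * s j) * u * (s j * s j) := by
                  rw [cs.simple_mul_simple_self j]; group
              _ = s j * (s j * u * s j) * s j := by group
              _ = s j * s i * s j := by rw [h]
          · intro h; rw [h]
            calc s j * (s j * s i * s j) * s j = (s j * s j) * s i * (s j * s j) := by group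
              _ = s i := by rw [cs.simple_mul_simple_self j]; group
        rw [e1, show (s j * s i * s j : W) = s j * p ^ 1 by rw [pow_one, hp]; group, hu]
        exact cond k 1 t
      rw [Prod.mk.injEq]
      constructor
      · show s i * (s j * u * s j) * s i = p ^ (k+1) * t * (p ^ (k+1))⁻¹
        have hpinv : p⁻¹ = s j * s i := by
          rw [hp, mul_inv_rev, cs.inv_simple, cs.inv_simple]
        rw [hu, show p ^ (k+1) = p * p ^ k from pow_succ' p k, mul_inv_rev, hpinv, hp]
        group
      · show (ε * _) * (if u = s j then (-1 : ℤˣ) else 1) * (if s j * u * s j = s i then (-1 : ℤˣ) else 1) = ε * _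
        rw [if_congr c1 rfl rfl, if_congr c2 rfl rfl,
          show 2 * (k+1) = (2 * k + 1) + 1 by ring, Finset.prod_range_succ, Finset.prod_range_succ]
        simp [mul_assoc]
  show (cs.sgnFun i * cs.sgnFun j) ^ m = 1
  funext x
  obtain ⟨t, ε⟩ := x
  rw [key m t ε]
  show _ = (t, ε)
  have h1 : p ^ m * t * (p ^ m)⁻¹ = t := by rw [hpm]; group
  have h2 : ∏ n ∈ Finset.range (2 * m), (if t = s j * p ^ n then (-1 : ℤˣ) else 1) = 1 := by
    rw [two_mul, Finset.prod_range_add]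
    have : ∀ n : ℕ, (if t = s j * p ^ (m + n) then (-1 : ℤˣ) else 1)
        = (if t = s j * p ^ n then (-1 : ℤˣ) else 1) := by
      intro n
      congr 2
      rw [pow_add, hpm, one_mul]
    rw [Finset.prod_congr rfl (fun n _ => this n)]
    exact Int.units_mul_self _
  rw [h1, h2, mul_one]

/-- The sign representation used to prove the strong exchange property. -/
private noncomputable def sgnHom : W →* Function.End (W × ℤˣ) :=
  cs.lift ⟨cs.sgnFun, cs.sgnFun_liftable⟩

private noncomputable def sgnF (t : W) (l : List W) : ℤˣ :=
  (l.map fun u => if t = u then (-1 : ℤˣ) else 1).prod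

private lemma sgnF_cons (t x : W) (l : List W) :
    sgnF t (x :: l) = (if t = x then (-1:ℤˣ) else 1) * sgnF t l := by
  simp [sgnF]

private lemma mem_of_sgnF_ne_one {t : W} {l : List W} (h : sgnF t l ≠ 1) : t ∈ l := by
  by_contra hm
  apply h
  apply List.prod_eq_one
  intro x hx
  obtain ⟨u, hu, rfl⟩ := List.mem_map.mp hx
  rw [if_neg]
  rintro rfl
  exact hm hu

private lemma sgnHom_wordProd (ω : List B) (t : W) (ε : ℤˣ) :
    cs.sgnHom (π ω) (t, ε) = (π ω * t * (π ω)⁻¹, ε * sgnF t (ris ω)) := by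
  induction ω generalizing t ε with
  | nil => simp [sgnF]; rfl
  | cons i ω IH =>
      have h1 : cs.sgnHom (π (i :: ω)) = cs.sgnFun i * cs.sgnHom (π ω) := by
        rw [cs.wordProd_cons, map_mul]
        congr 1
        exact cs.lift_apply_simple cs.sgnFun_liftable i
      have h2 : cs.sgnHom (π (i :: ω)) (t, ε)
          = cs.sgnFun i (cs.sgnHom (π ω) (t, ε)) := by rw [h1]; rfl
      rw [h2, IH]
      have h3 : ris (i :: ω) = ((π ω)⁻¹ * s i * π ω) :: ris ω := rfl
      rw [h3, sgnF_cons]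
      show (_, _) = (_, _)
      rw [Prod.mk.injEq]
      constructor
      · rw [cs.wordProd_cons, mul_inv_rev, cs.inv_simple]
        group
      · have e : (π ω * t * (π ω)⁻¹ = s i) ↔ (t = (π ω)⁻¹ * s i * π ω) := by
          rw [conj_eq_iff']
        rw [if_congr e rfl rfl]
        simp [mul_assoc, mul_comm, mul_left_comm]

/-- The sign of a reflection relative to `w`. -/
private noncomputable def eta (w t : W) : ℤˣ := (cs.sgnHom w (t, 1)).2

private lemma sgnF_eq_eta (ω : List B) (t : W) : sgnF t (ris ω) = cs.eta (π ω) t := by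
  rw [eta, cs.sgnHom_wordProd, one_mul]

private lemma sgnHom_apply (w t : W) (ε : ℤˣ) :
    cs.sgnHom w (t, ε) = (w * t * w⁻¹, ε * cs.eta w t) := by
  obtain ⟨ω, rfl⟩ := cs.wordProd_surjective w
  rw [cs.sgnHom_wordProd, sgnF_eq_eta cs]

private lemma eta_mul (x y t : W) : cs.eta (x * y) t = cs.eta x (y * t * y⁻¹) * cs.eta y t := by
  have h : cs.sgnHom (x * y) (t, 1) = cs.sgnHom x (cs.sgnHom y (t, 1)) := by
    rw [map_mul]; rfl
  rw [eta, h, cs.sgnHom_apply y, one_mul, cs.sgnHom_apply x]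
  exact mul_comm _ _

private lemma eta_one (t : W) : cs.eta 1 t = 1 := by
  have : cs.sgnHom (1 : W) (t, 1) = (t, 1) := by rw [map_one]; rfl
  rw [eta, this]

private lemma eta_simple_self (i : B) : cs.eta (s i) (s i) = -1 := by
  have h : cs.sgnHom (s i) = cs.sgnFun i := cs.lift_apply_simple cs.sgnFun_liftable i
  rw [eta, h]
  show ((1 : ℤˣ) * if (s i : W) = s i then -1 else 1) = -1
  rw [if_pos rfl, one_mul]

private lemma eta_refl_self {t : W} (ht : cs.IsReflection t) : cs.eta t t = -1 := by
  obtain ⟨u, i, rfl⟩ := ht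
  have key : cs.eta u (s i) * cs.eta u⁻¹ (u * (s i * u⁻¹)) = 1 := by
    have h := cs.eta_mul u u⁻¹ (u * (s i * u⁻¹))
    rw [mul_inv_cancel, cs.eta_one,
      show u⁻¹ * (u * (s i * u⁻¹)) * u⁻¹⁻¹ = s i from by group] at h
    exact h.symm
  have e2 : (s i * u⁻¹) * (u * (s i * u⁻¹)) * (s i * u⁻¹)⁻¹ = s i := by
    rw [mul_inv_rev, inv_inv, cs.inv_simple]
    calc s i * u⁻¹ * (u * (s i * u⁻¹)) * (u * s i)
        = s i * (u⁻¹ * u) * (s i * (u⁻¹ * u) * s i) := by group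
      _ = s i * (s i * s i) := by rw [inv_mul_cancel]; simp
      _ = s i := by rw [cs.simple_mul_simple_self i, mul_one]
  have e3 : u⁻¹ * (u * (s i * u⁻¹)) * u⁻¹⁻¹ = s i := by group
  rw [show (u * s i * u⁻¹ : W) = u * (s i * u⁻¹) from by group, cs.eta_mul, e2, cs.eta_mul, e3,
    cs.eta_simple_self, mul_left_comm, key, mul_one]

private lemma length_mul_lt_of_eta_neg {w t : W} (h : cs.eta w t = -1) : ℓ (w * t) < ℓ w := by
  obtain ⟨ω, hω, rfl⟩ := cs.exists_reduced_word' w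
  have h1 : sgnF t (ris ω) = -1 := by rw [sgnF_eq_eta cs]; exact h
  have h2 : t ∈ ris ω := mem_of_sgnF_ne_one (by rw [h1]; decide)
  obtain ⟨j, hj, hget⟩ := List.getElem_of_mem h2
  rw [cs.length_rightInvSeq] at hj
  have hgd : (ris ω).getD j 1 = t := by
    rw [List.getD_eq_getElem?_getD, List.getElem?_eq_getElem (by rwa [cs.length_rightInvSeq])]
    simpa using hget
  have h3 : π ω * t = π (ω.eraseIdx j) := by rw [← hgd]; exact cs.wordProd_mul_getD_rightInvSeq ω j
  rw [h3]
  calc ℓ (π (ω.eraseIdx j)) ≤ (ω.eraseIdx j).length := cs.length_wordProd_le _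
    _ < ω.length := by rw [← List.length_eraseIdx_add_one hj]; omega
    _ = ℓ (π ω) := hω.symm

private lemma eta_neg_of_length_mul_lt {w t : W} (ht : cs.IsReflection t)
    (h : ℓ (w * t) < ℓ w) : cs.eta w t = -1 := by
  rcases Int.units_eq_one_or (cs.eta w t) with he | he
  · exfalso
    have h5 : cs.eta (w * t) t = -1 := by
      rw [cs.eta_mul, ht.inv, show t * t * t = t by rw [ht.mul_self, one_mul],
        cs.eta_refl_self ht, he, one_mul]
    have := cs.length_mul_lt_of_eta_neg h5
    rw [mul_assoc, ht.mul_self, mul_one] at this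
    omega
  · exact he

/-- The strong exchange property (right multiplication version). -/
private lemma strong_exchange {w t : W} (ht : cs.IsReflection t) (h : ℓ (w * t) < ℓ w)
    {ω : List B} (hω : cs.IsReduced ω) (hπ : π ω = w) :
    ∃ j, j < ω.length ∧ π (ω.eraseIdx j) = w * t := by
  have he : cs.eta w t = -1 := cs.eta_neg_of_length_mul_lt ht h
  have h1 : sgnF t (ris ω) = -1 := by rw [sgnF_eq_eta cs, hπ]; exact he
  have h2 : t ∈ ris ω := mem_of_sgnF_ne_one (by rw [h1]; decide)
  obtain ⟨j, hj, hget⟩ := List.getElem_of_mem h2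
  rw [cs.length_rightInvSeq] at hj
  refine ⟨j, hj, ?_⟩
  have hgd : (ris ω).getD j 1 = t := by
    rw [List.getD_eq_getElem?_getD, List.getElem?_eq_getElem (by rwa [cs.length_rightInvSeq])]
    simpa using hget
  rw [← hπ, ← hgd]
  exact (cs.wordProd_mul_getD_rightInvSeq ω j).symm

/-- The strong exchange property (left multiplication version, simple reflection). -/
private lemma exchange_left {w : W} {i : B} (h : ℓ (s i * w) < ℓ w)
    {ω : List B} (hω : cs.IsReduced ω) (hπ : π ω = w) :
    ∃ j, j < ω.length ∧ π (ω.eraseIdx j) = s i * w := by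
  have ht : cs.IsReflection (w⁻¹ * s i * w) := by
    have := (cs.isReflection_simple i).conj w⁻¹
    rwa [inv_inv] at this
  have hlen : ℓ (w * (w⁻¹ * s i * w)) < ℓ w := by
    rw [show w * (w⁻¹ * s i * w) = s i * w by group]
    exact h
  obtain ⟨j, hj, hej⟩ := cs.strong_exchange ht hlen hω hπ
  refine ⟨j, hj, ?_⟩
  rw [hej]
  group


private lemma wordProd_mem_closure {J : Set B} {ω : List B} (h : ∀ i ∈ ω, i ∈ J) :
    π ω ∈ cs.parabolic J := by
  induction ω with
  | nil => rw [cs.wordProd_nil]; exact one_mem _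
  | cons i ω ih =>
      rw [cs.wordProd_cons]
      exact mul_mem (Subgroup.subset_closure ⟨i, h i (by simp), rfl⟩)
        (ih fun j hj => h j (by simp [hj]))

private lemma exists_word_of_mem_parabolic {J : Set B} {v : W} (hv : v ∈ cs.parabolic J) :
    ∃ ω : List B, (∀ i ∈ ω, i ∈ J) ∧ π ω = v := by
  induction hv using Subgroup.closure_induction with
  | mem x hx =>
      obtain ⟨i, hi, rfl⟩ := hx
      exact ⟨[i], by simpa using hi, by simp⟩
  | one => exact ⟨[], by simp, by simp [wordProd_nil]⟩
  | mul x y hx hy ihx ihy =>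
      obtain ⟨a, ha, hpa⟩ := ihx
      obtain ⟨b, hb, hpb⟩ := ihy
      refine ⟨a ++ b, ?_, by rw [cs.wordProd_append, hpa, hpb]⟩
      intro i hi
      rcases List.mem_append.mp hi with h | h
      · exact ha i h
      · exact hb i h
  | inv x hx ih =>
      obtain ⟨a, ha, hpa⟩ := ih
      exact ⟨a.reverse, fun i hi => ha i (List.mem_reverse.mp hi),
        by rw [cs.wordProd_reverse, hpa]⟩

private lemma exists_reduced_J_word {J : Set B} : ∀ (n : ℕ) (ω : List B), ω.length = n →
    (∀ i ∈ ω, i ∈ J) →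
    ∃ ω', cs.IsReduced ω' ∧ (∀ i ∈ ω', i ∈ J) ∧ π ω' = π ω := by
  intro n
  induction n using Nat.strong_induction_on with
  | _ n IH =>
    intro ω hlen hJ
    by_cases hred : cs.IsReduced ω
    · exact ⟨ω, hred, hJ, rfl⟩
    · have hne : ω ≠ [] := by
        rintro rfl
        exact hred (by simp [IsReduced])
      have hlpos : 0 < ω.length := List.length_pos_of_ne_nil hne
      have hwit : ¬ cs.IsReduced (ω.take (ω.length - 1 + 1)) := by
        rwa [Nat.sub_add_cancel hlpos, List.take_length]
      have hex : ∃ j, ¬ cs.IsReduced (ω.take (j+1)) := ⟨ω.length - 1, hwit⟩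
      set j := Nat.find hex with hjdef
      have hj1 : ¬ cs.IsReduced (ω.take (j+1)) := Nat.find_spec hex
      have hjle : j ≤ ω.length - 1 := Nat.find_min' hex hwit
      have hjlt : j < ω.length := by omega
      have htkred : cs.IsReduced (ω.take j) := by
        rcases Nat.eq_zero_or_pos j with h0 | h0
        · rw [h0]; simp [IsReduced]
        · have := Nat.find_min hex (m := j - 1) (by omega)
          rw [not_not] at this
          rwa [show j - 1 + 1 = j by omega] at this
      have htklen : (ω.take j).length = j := by
        rw [List.length_take]; omega
      have hsplit : ω.take (j+1) = ω.take j ++ [ω[j]] := by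
        rw [List.take_succ, List.getElem?_eq_getElem hjlt]
        rfl
      have hprod : π (ω.take (j+1)) = π (ω.take j) * s (ω[j]) := by
        rw [hsplit, cs.wordProd_append, cs.wordProd_singleton]
      have hlt : ℓ (π (ω.take j) * s (ω[j])) < ℓ (π (ω.take j)) := by
        have h1 : ℓ (π (ω.take (j+1))) ≠ (ω.take (j+1)).length := hj1
        have h2 : (ω.take (j+1)).length = j + 1 := by
          rw [List.length_take]; omega
        have h3 := cs.length_mul_simple (π (ω.take j)) (ω[j])
        have h4 : ℓ (π (ω.take j)) = j := by rw [htkred, htklen]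
        rw [← hprod] at h3
        rcases h3 with h3 | h3 <;> rw [hprod] at * <;> omega
      obtain ⟨k, hk, hek⟩ := cs.strong_exchange (cs.isReflection_simple (ω[j])) hlt htkred rfl
      rw [htklen] at hk
      set ω' : List B := ((ω.take j).eraseIdx k) ++ ω.drop (j+1) with hω'
      have hπ' : π ω' = π ω := by
        rw [hω', cs.wordProd_append, hek, ← hprod, ← cs.wordProd_append,
          List.take_append_drop]
      have hJ' : ∀ i ∈ ω', i ∈ J := by
        intro i hi
        rcases List.mem_append.mp hi with h | h
        · exact hJ i ((List.take_sublist j ω).subset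
            ((List.eraseIdx_sublist _ k).subset h))
        · exact hJ i ((List.drop_sublist (j+1) ω).subset h)
      have hlen' : ω'.length < n := by
        have e1 := List.length_eraseIdx_add_one (show k < (ω.take j).length by rwa [htklen])
        rw [htklen] at e1
        rw [hω', List.length_append, List.length_drop]
        omega
      obtain ⟨ω'', h1, h2, h3⟩ := IH ω'.length hlen' ω' rfl hJ'
      exact ⟨ω'', h1, h2, by rw [h3, hπ']⟩

private lemma exists_reduced_word_of_mem_parabolic {J : Set B} {v : W}
    (hv : v ∈ cs.parabolic J) :
    ∃ ω, cs.IsReduced ω ∧ (∀ i ∈ ω, i ∈ J) ∧ π ω = v := by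
  obtain ⟨ω, hJ, hπ⟩ := cs.exists_word_of_mem_parabolic hv
  obtain ⟨ω', h1, h2, h3⟩ := cs.exists_reduced_J_word ω.length ω rfl hJ
  exact ⟨ω', h1, h2, by rw [h3, hπ]⟩

private lemma prefix_decomp {J : Set B} {w : W} (hw : ∀ i ∈ J, ℓ (s i * w) < ℓ w) :
    ∀ (n : ℕ) (v : W), ℓ v = n → v ∈ cs.parabolic J →
    ∃ α β : List B, cs.IsReduced (α ++ β) ∧ π (α ++ β) = w ∧ π α = v ∧ α.length = ℓ v := by
  intro n
  induction n using Nat.strong_induction_on with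
  | _ n IH =>
    intro v hn hv
    rcases eq_or_ne v 1 with rfl | hv1
    · obtain ⟨ω, hred, hπ⟩ := cs.exists_reduced_word' w
      exact ⟨[], ω, by simpa using hred, by simp [← hπ], by simp [wordProd_nil], by simp⟩
    · obtain ⟨ω, hred, hJ, hπ⟩ := cs.exists_reduced_word_of_mem_parabolic hv
      cases ω with
      | nil => exact absurd hπ.symm (by simpa using hv1)
      | cons i ω' =>
        have hiJ : i ∈ J := hJ i (by simp)
        have hred' : cs.IsReduced ω' := by
          have := hred.drop 1
          simpa using this
        have hv' : π ω' ∈ cs.parabolic J := cs.wordProd_mem_closure (fun q hq => hJ q (by simp [hq]))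
        have hvv : v = s i * π ω' := by rw [← hπ, cs.wordProd_cons]
        have hlv : ℓ v = ω'.length + 1 := by
          rw [← hπ, hred]
          simp
        have hlv' : ℓ (π ω') = ω'.length := hred'
        obtain ⟨α, β, hab, hπab, hπα, hlα⟩ := IH (ℓ (π ω')) (by omega) (π ω') rfl hv'
        obtain ⟨k, hk, hek⟩ := cs.exchange_left (hw i hiJ) hab hπab
        rcases lt_or_ge k α.length with hkα | hkα
        · exfalso
          rw [List.eraseIdx_append_of_lt_length hkα] at hek
          have hπβ : π β = (π ω')⁻¹ * w := by
            have h := cs.wordProd_append α β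
            rw [hπab, hπα] at h
            rw [h]
            group
          have hfin : π (α.eraseIdx k) = v := by
            have h5 : π (α.eraseIdx k) * π β = s i * w := by
              rw [← cs.wordProd_append]; exact hek
            rw [hπβ] at h5
            calc π (α.eraseIdx k)
                = (π (α.eraseIdx k) * ((π ω')⁻¹ * w)) * ((π ω')⁻¹ * w)⁻¹ := by group
              _ = (s i * w) * ((π ω')⁻¹ * w)⁻¹ := by rw [h5]
              _ = s i * π ω' := by group
              _ = v := hvv.symm
          have hlen1 : ℓ v ≤ (α.eraseIdx k).length := by
            rw [← hfin]; exact cs.length_wordProd_le _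
          have hlen2 := List.length_eraseIdx_add_one hkα
          omega
        · rw [List.eraseIdx_append_of_length_le hkα] at hek
          refine ⟨i :: α, β.eraseIdx (k - α.length), ?_, ?_, ?_, ?_⟩
          · have he1 := List.length_eraseIdx_add_one
              (show k - α.length < β.length by rw [List.length_append] at hk; omega)
            have hlen2 : (i :: (α ++ β.eraseIdx (k - α.length))).length = (α ++ β).length := by
              rw [List.length_cons, List.length_append, List.length_append]
              omega
            have hπ2 : π (i :: (α ++ β.eraseIdx (k - α.length))) = w := by
              rw [cs.wordProd_cons, hek, ← mul_assoc, cs.simple_mul_simple_self, one_mul]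
            show ℓ (π (i :: α ++ β.eraseIdx (k - α.length))) = _
            rw [show (i :: α ++ β.eraseIdx (k - α.length)) = i :: (α ++ β.eraseIdx (k - α.length))
              from rfl]
            rw [hπ2, hlen2, ← hπab]
            exact hab
          · show π (i :: (α ++ β.eraseIdx (k - α.length))) = w
            rw [cs.wordProd_cons, hek, ← mul_assoc, cs.simple_mul_simple_self, one_mul]
          · rw [cs.wordProd_cons, hπα]
            exact hvv.symm
          · rw [List.length_cons, hlα]
            omega

private lemma rightWeakLE_of_mem_parabolic {J : Set B} {w : W}
    (hw : ∀ i ∈ J, ℓ (s i * w) < ℓ w) {v : W} (hv : v ∈ cs.parabolic J) :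
    cs.rightWeakLE v w := by
  obtain ⟨α, β, hab, hπab, hπα, hlα⟩ := cs.prefix_decomp hw (ℓ v) v rfl hv
  have hπβ : π β = v⁻¹ * w := by
    have h := cs.wordProd_append α β
    rw [hπab, hπα] at h
    rw [h]
    group
  have h1 : ℓ (v⁻¹ * w) ≤ β.length := by
    rw [← hπβ]; exact cs.length_wordProd_le _
  have h2 : ℓ w = α.length + β.length := by
    rw [← hπab, hab, List.length_append]
  have h3 : ℓ w ≤ ℓ v + ℓ (v⁻¹ * w) := by
    have := cs.length_mul_le v (v⁻¹ * w)
    rwa [← mul_assoc, mul_inv_cancel, one_mul] at this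
  show ℓ v + ℓ (v⁻¹ * w) = ℓ w
  omega

private lemma bruhatLE_of_rightWeakLE {u w : W} (h : cs.rightWeakLE u w) : cs.bruhatLE u w := by
  obtain ⟨α, hα, hπα⟩ := cs.exists_reduced_word' u
  obtain ⟨β, hβ, hπβ⟩ := cs.exists_reduced_word' (u⁻¹ * w)
  refine ⟨α ++ β, ?_, ?_, α, List.sublist_append_left α β, hπα.symm⟩
  · have hthis : π (α ++ β) = w := by
      rw [cs.wordProd_append, ← hπα, ← hπβ]
      group
    have h' : cs.length u + cs.length (u⁻¹ * w) = cs.length w := h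
    show ℓ (π (α ++ β)) = (α ++ β).length
    rw [hthis, List.length_append, ← hα, ← hβ, ← hπα, ← hπβ]
    omega
  · rw [cs.wordProd_append, ← hπα, ← hπβ]
    group

private lemma mem_parabolic_support_of_bruhatLE {u w : W} (h : cs.bruhatLE u w) :
    u ∈ cs.parabolic (cs.support w) := by
  obtain ⟨ω, hred, hπ, ω', hsub, hπ'⟩ := h
  rw [← hπ']
  exact cs.wordProd_mem_closure (fun i hi => ⟨ω, hred, hπ, hsub.subset hi⟩)

private lemma mem_parabolic_support_self (w : W) : w ∈ cs.parabolic (cs.support w) := by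
  apply cs.mem_parabolic_support_of_bruhatLE (u := w)
  obtain ⟨ω, hred, hπ⟩ := cs.exists_reduced_word' w
  exact ⟨ω, hred, hπ.symm, ω, List.Sublist.refl ω, hπ.symm⟩


end CoxeterSystem

/-- in a finite Coxeter group, the Bruhat lower interval `[id, w]` coincides
with the right weak order lower interval `[id, w]_R` iff `w` is the longest element of
the standard parabolic subgroup `W_{S(w)}` generated by the support of `w`. -/
theorem bruhat_interval_eq_weak_interval_iff {B W : Type*} [Group W] [Finite W]
    {M : CoxeterMatrix B} (cs : CoxeterSystem M W) (w : W) :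
    {u | cs.bruhatLE u w} = {u | cs.rightWeakLE u w} ↔
      cs.IsLongestOf (cs.parabolic (cs.support w)) w := by
  classical
  constructor
  · rintro hset
    have hD : ∀ i ∈ cs.support w, cs.length (cs.simple i * w) < cs.length w := by
      intro i hi
      obtain ⟨ω, hred, hπ, hmem⟩ := hi
      have hb : cs.bruhatLE (cs.simple i) w :=
        ⟨ω, hred, hπ, [i], List.singleton_sublist.mpr hmem, cs.wordProd_singleton i⟩
      have hr : cs.rightWeakLE (cs.simple i) w := by
        rw [Set.ext_iff] at hset
        exact (hset _).mp hb
      have hr' : cs.length (cs.simple i) + cs.length ((cs.simple i)⁻¹ * w) = cs.length w := hr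
      rw [cs.length_simple, cs.inv_simple] at hr'
      omega
    refine ⟨cs.mem_parabolic_support_self w, ?_⟩
    intro u hu
    have h5 : cs.length u + cs.length (u⁻¹ * w) = cs.length w :=
      cs.rightWeakLE_of_mem_parabolic hD hu
    omega
  · rintro ⟨hwmem, hmax⟩
    have hD : ∀ i ∈ cs.support w, cs.length (cs.simple i * w) < cs.length w := by
      intro i hi
      have h1 : cs.simple i * w ∈ cs.parabolic (cs.support w) :=
        mul_mem (Subgroup.subset_closure ⟨i, hi, rfl⟩) hwmem
      have h2 := hmax _ h1
      have h3 := cs.length_simple_mul_ne w i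
      omega
    ext u
    constructor
    · intro hb
      exact cs.rightWeakLE_of_mem_parabolic hD (cs.mem_parabolic_support_of_bruhatLE hb)
    · intro hr
      exact cs.bruhatLE_of_rightWeakLE hr
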